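/- Let Z be a random vector in ℝ^d with E[Z] = 0, E[Z Z^T] ≽ a I_d for some a > 0, and ‖Z‖₂ ≤ b almost surely for some b > 0. Then for every unit vector λ ∈ S^{d-1}, P(λ^T Z ≥ c₂) ≥ c₃, where c₂ = min(√(a/8), a/(8b)) and c₃ = a/(16 b²). -/

import Mathlib

open MeasureTheory

/-- Anti-concentration (Lemma 3, centered case): a bounded, centered random vector `Z`
with covariance `E[Z Zᵀ] ≽ a I` satisfies `P(λᵀZ ≥ c₂) ≥ c₃` for every unit vector `λ`,
with `c₂ = min(√(a/8), a/(8b))` and `c₃ = a/(16 b²)`. -/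
theorem anti_concentration {Ω : Type*} [MeasurableSpace Ω] (μ : Measure Ω)
    [IsProbabilityMeasure μ]
    {d : ℕ} (Z : Ω → EuclideanSpace ℝ (Fin d)) (hZ : Measurable Z)
    (a b : ℝ) (ha : 0 < a) (hb : 0 < b)
    (hmean : ∫ ω, Z ω ∂μ = 0)
    (hbdd : ∀ᵐ ω ∂μ, ‖Z ω‖ ≤ b)
    (hcov : ∀ v : EuclideanSpace ℝ (Fin d), a * ‖v‖ ^ 2 ≤ ∫ ω, (inner ℝ v (Z ω) : ℝ) ^ 2 ∂μ) :
    ∀ lam : EuclideanSpace ℝ (Fin d), ‖lam‖ = 1 →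
      ENNReal.ofReal (a / (16 * b ^ 2))
        ≤ μ {ω | min (Real.sqrt (a / 8)) (a / (8 * b)) ≤ (inner ℝ lam (Z ω) : ℝ)} := by
  intro lam hlam
  set c : ℝ := min (Real.sqrt (a / 8)) (a / (8 * b)) with hcdef
  have hc0 : 0 ≤ c := le_min (Real.sqrt_nonneg _) (by positivity)
  have hc2 : c ^ 2 ≤ a / 8 := by
    have h1 : c ≤ Real.sqrt (a / 8) := min_le_left _ _
    calc c ^ 2 ≤ Real.sqrt (a / 8) ^ 2 := pow_le_pow_left₀ hc0 h1 2
      _ = a / 8 := Real.sq_sqrt (by positivity)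
  have hbc : b * c ≤ a / 8 := by
    have h1 : c ≤ a / (8 * b) := min_le_right _ _
    have h2 : b * c ≤ b * (a / (8 * b)) := by nlinarith
    have h3 : b * (a / (8 * b)) = a / 8 := by field_simp
    linarith
  set X : Ω → ℝ := fun ω => inner ℝ lam (Z ω) with hXdef
  have hXm : Measurable X := (innerSL ℝ lam).continuous.measurable.comp hZ
  have hXb : ∀ᵐ ω ∂μ, |X ω| ≤ b := by
    filter_upwards [hbdd] with ω hω
    calc |X ω| ≤ ‖lam‖ * ‖Z ω‖ := abs_real_inner_le_norm _ _
      _ = ‖Z ω‖ := by rw [hlam, one_mul]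
      _ ≤ b := hω
  have hZint : Integrable Z μ :=
    ⟨hZ.aestronglyMeasurable, HasFiniteIntegral.of_bounded hbdd⟩
  have hXint : Integrable X μ :=
    ⟨hXm.aestronglyMeasurable, HasFiniteIntegral.of_bounded
      (by simpa [Real.norm_eq_abs] using hXb)⟩
  have hEX : ∫ ω, X ω ∂μ = 0 := by
    have h := (innerSL ℝ lam).integral_comp_comm hZint
    simpa [hmean] using h
  set A : Set Ω := {ω | c ≤ X ω} with hAdef
  have hA : MeasurableSet A := measurableSet_le measurable_const hXm
  set p : ℝ := (μ A).toReal with hpdef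
  have hp0 : 0 ≤ p := ENNReal.toReal_nonneg
  have hI : ∫ ω, A.indicator (fun _ => (1 : ℝ)) ω ∂μ = p := by
    rw [integral_indicator_const (1 : ℝ) hA]; simp [hpdef, Measure.real]
  have hIndInt : Integrable (A.indicator fun _ => (1 : ℝ)) μ :=
    (integrable_const 1).indicator hA
  have hXsqInt : Integrable (fun ω => X ω ^ 2) μ := by
    refine ⟨(hXm.pow_const 2).aestronglyMeasurable,
      HasFiniteIntegral.of_bounded (C := b ^ 2) ?_⟩
    filter_upwards [hXb] with ω h
    rw [Real.norm_eq_abs, abs_pow]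
    exact pow_le_pow_left₀ (abs_nonneg _) h 2
  have hXnegInt : Integrable (fun ω => max (-X ω) 0) μ := by
    refine ⟨(hXm.neg.max measurable_const).aestronglyMeasurable,
      HasFiniteIntegral.of_bounded (C := b) ?_⟩
    filter_upwards [hXb] with ω h
    rw [Real.norm_eq_abs]
    rcases abs_le.mp h with ⟨h1, h2⟩
    rw [abs_of_nonneg (le_max_right _ _)]
    exact max_le (by linarith) (by linarith)
  have hXposInt : Integrable (fun ω => max (X ω) 0) μ := by
    refine ⟨(hXm.max measurable_const).aestronglyMeasurable,
      HasFiniteIntegral.of_bounded (C := b) ?_⟩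
    filter_upwards [hXb] with ω h
    rw [Real.norm_eq_abs]
    rcases abs_le.mp h with ⟨h1, h2⟩
    rw [abs_of_nonneg (le_max_right _ _)]
    exact max_le (by linarith) (by linarith)
  -- ∫ X⁻ = ∫ X⁺
  have hnegpos : ∫ ω, max (-X ω) 0 ∂μ = ∫ ω, max (X ω) 0 ∂μ := by
    have h := integral_sub hXposInt hXnegInt
    have h2 : (fun ω => max (X ω) 0 - max (-X ω) 0) = fun ω => X ω := by
      funext ω; exact max_zero_sub_max_neg_zero_eq_self _
    rw [h2, hEX] at h
    linarith [h.symm]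
  -- ∫ X⁺ ≤ c + b p
  have hXposle : ∫ ω, max (X ω) 0 ∂μ ≤ c + b * p := by
    have hpt : ∀ᵐ ω ∂μ, max (X ω) 0 ≤ c + b * A.indicator (fun _ => (1 : ℝ)) ω := by
      filter_upwards [hXb] with ω hω
      rcases abs_le.mp hω with ⟨h1, h2⟩
      by_cases h : ω ∈ A
      · rw [Set.indicator_of_mem h]
        exact max_le (by linarith) (by nlinarith)
      · rw [Set.indicator_of_notMem h]
        have hlt : X ω < c := lt_of_not_ge h
        exact max_le (by linarith) (by linarith)
    have hmono := integral_mono_ae hXposInt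
      ((integrable_const c).add (hIndInt.const_mul b)) hpt
    calc ∫ ω, max (X ω) 0 ∂μ
        ≤ ∫ ω, (c + b * A.indicator (fun _ => (1 : ℝ)) ω) ∂μ := hmono
      _ = c + b * p := by
          rw [integral_add (integrable_const c) (hIndInt.const_mul b),
            integral_const, integral_const_mul, hI]
          simp
  -- main decomposition
  have hmain : ∫ ω, X ω ^ 2 ∂μ
      ≤ b ^ 2 * p + c ^ 2 + b * ∫ ω, max (-X ω) 0 ∂μ := by
    have hpt : ∀ᵐ ω ∂μ, X ω ^ 2
        ≤ b ^ 2 * A.indicator (fun _ => (1 : ℝ)) ω + c ^ 2 + b * max (-X ω) 0 := by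
      filter_upwards [hXb] with ω hω
      rcases abs_le.mp hω with ⟨h1, h2⟩
      by_cases h : ω ∈ A
      · rw [Set.indicator_of_mem h]
        have hmax : (0 : ℝ) ≤ max (-X ω) 0 := le_max_right _ _
        nlinarith
      · rw [Set.indicator_of_notMem h]
        have hlt : X ω < c := lt_of_not_ge h
        rcases le_or_gt 0 (X ω) with h0 | h0
        · have hmax : (0 : ℝ) ≤ max (-X ω) 0 := le_max_right _ _
          nlinarith
        · have hmax : max (-X ω) 0 = -X ω := max_eq_left (by linarith)
          rw [hmax]
          nlinarith
    have hRint : Integrable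
        (fun ω => b ^ 2 * A.indicator (fun _ => (1 : ℝ)) ω + c ^ 2 + b * max (-X ω) 0) μ :=
      ((hIndInt.const_mul (b ^ 2)).add (integrable_const (c ^ 2))).add (hXnegInt.const_mul b)
    have hmono := integral_mono_ae hXsqInt hRint hpt
    calc ∫ ω, X ω ^ 2 ∂μ
        ≤ ∫ ω, (b ^ 2 * A.indicator (fun _ => (1 : ℝ)) ω + c ^ 2 + b * max (-X ω) 0) ∂μ :=
          hmono
      _ = b ^ 2 * p + c ^ 2 + b * ∫ ω, max (-X ω) 0 ∂μ := by
          have hint1 : Integrable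
              (fun ω => b ^ 2 * A.indicator (fun _ => (1 : ℝ)) ω + c ^ 2) μ := by
            exact (hIndInt.const_mul _).add (integrable_const _)
          rw [integral_add hint1 (hXnegInt.const_mul b),
            integral_add (hIndInt.const_mul (b ^ 2)) (integrable_const (c ^ 2)),
            integral_const_mul, integral_const_mul, hI, integral_const]
          simp
  have hcovX : a ≤ ∫ ω, X ω ^ 2 ∂μ := by
    have h := hcov lam
    rwa [hlam, one_pow, mul_one] at h
  have hfinal : a / (16 * b ^ 2) ≤ p := by
    have h1 : ∫ ω, max (-X ω) 0 ∂μ ≤ c + b * p := by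
      rw [hnegpos]; exact hXposle
    rw [div_le_iff₀ (by positivity)]
    nlinarith [mul_le_mul_of_nonneg_left h1 hb.le, mul_nonneg (mul_nonneg hb.le hb.le) hp0]
  exact ENNReal.ofReal_le_of_le_toReal hfinal
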